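/- Let q = min { q_n : n ≥ 1 } and fix ε ∈ {0, 1, …, q − 1}. Then the digit sequence (ε_k) satisfies σ^n(x) = x = ε/(q − 1) for all n ≥ 0 if and only if for every n ≥ 1 one has ε_n·(q − 1) = (q_n − 1)·ε, i.e., ε_n = (q_n − 1)ε/(q − 1) is a nonnegative integer for all n. -/

import Mathlib

open Finset Filter Topology

/-- The `n`-th shift `σ^n(x) = Σ_{k=n+1}^∞ ε_k/(q_{n+1} q_{n+2} ⋯ q_k)` of the Cantor
series with bases `q` and digits `ε`; in particular `σ^0(x) = x`. -/
noncomputable def cantorShift (q ε : ℕ → ℕ) (n : ℕ) : ℝ :=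
  ∑' k : ℕ, (ε (n + k + 1) : ℝ) / ∏ i ∈ Finset.Icc (n + 1) (n + k + 1), (q i : ℝ)

section aux

variable {q ε : ℕ → ℕ}

lemma qposR (hq : ∀ k, 1 ≤ k → 2 ≤ q k) {i : ℕ} (hi : 1 ≤ i) : (0:ℝ) < q i := by
  have := hq i hi
  exact_mod_cast lt_of_lt_of_le (by norm_num : (0:ℕ) < 2) this

lemma prodQ_pos (hq : ∀ k, 1 ≤ k → 2 ≤ q k) (a b : ℕ) :
    0 < ∏ i ∈ Finset.Icc (a + 1) b, (q i : ℝ) := by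
  apply Finset.prod_pos
  intro i hi
  exact qposR hq (le_trans (Nat.le_add_left 1 a) (Finset.mem_Icc.mp hi).1)

lemma two_pow_le_prod (hq : ∀ k, 1 ≤ k → 2 ≤ q k) (n k : ℕ) :
    (2:ℝ) ^ k ≤ ∏ i ∈ Finset.Icc (n + 1) (n + k), (q i : ℝ) := by
  have hcard : (Finset.Icc (n + 1) (n + k)).card = k := by
    rw [Nat.card_Icc]; omega
  calc (2:ℝ) ^ k = ∏ _i ∈ Finset.Icc (n + 1) (n + k), (2:ℝ) := by
        rw [Finset.prod_const, hcard]
    _ ≤ ∏ i ∈ Finset.Icc (n + 1) (n + k), (q i : ℝ) := by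
        apply Finset.prod_le_prod (fun i _ => by norm_num)
        intro i hi
        have : 1 ≤ i := le_trans (Nat.le_add_left 1 n) (Finset.mem_Icc.mp hi).1
        exact_mod_cast hq i this

lemma term_le (hq : ∀ k, 1 ≤ k → 2 ≤ q k) (hε : ∀ k, 1 ≤ k → ε k ≤ q k - 1) (n k : ℕ) :
    (ε (n + k + 1) : ℝ) / ∏ i ∈ Finset.Icc (n + 1) (n + k + 1), (q i : ℝ) ≤ (1/2 : ℝ) ^ k := by
  have hP := prodQ_pos hq n (n + k)
  have hq1 : (0:ℝ) < q (n + k + 1) := qposR hq (by omega)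
  have hsplit : ∏ i ∈ Finset.Icc (n + 1) (n + k + 1), (q i : ℝ)
      = (∏ i ∈ Finset.Icc (n + 1) (n + k), (q i : ℝ)) * q (n + k + 1) :=
    Finset.prod_Icc_succ_top (by omega) _
  have hεle : (ε (n + k + 1) : ℝ) ≤ q (n + k + 1) := by
    have h1 := hε (n + k + 1) (by omega)
    have h2 := hq (n + k + 1) (by omega)
    exact_mod_cast le_trans h1 (Nat.sub_le _ _)
  rw [hsplit]
  calc (ε (n + k + 1) : ℝ) / ((∏ i ∈ Finset.Icc (n + 1) (n + k), (q i : ℝ)) * q (n + k + 1))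
      ≤ (q (n + k + 1) : ℝ) / ((∏ i ∈ Finset.Icc (n + 1) (n + k), (q i : ℝ)) * q (n + k + 1)) := by
        gcongr
    _ = 1 / (∏ i ∈ Finset.Icc (n + 1) (n + k), (q i : ℝ)) := by
        field_simp
    _ ≤ 1 / (2:ℝ) ^ k := by
        exact one_div_le_one_div_of_le (by positivity) (two_pow_le_prod hq n k)
    _ = (1/2 : ℝ) ^ k := by rw [one_div_pow]

lemma cantor_summable (hq : ∀ k, 1 ≤ k → 2 ≤ q k) (hε : ∀ k, 1 ≤ k → ε k ≤ q k - 1) (n : ℕ) :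
    Summable (fun k : ℕ => (ε (n + k + 1) : ℝ) / ∏ i ∈ Finset.Icc (n + 1) (n + k + 1), (q i : ℝ)) := by
  apply Summable.of_nonneg_of_le (fun k => by positivity) (term_le hq hε n)
  exact summable_geometric_of_lt_one (by norm_num) (by norm_num)

lemma cantor_rec (hq : ∀ k, 1 ≤ k → 2 ≤ q k) (hε : ∀ k, 1 ≤ k → ε k ≤ q k - 1) (n : ℕ) :
    cantorShift q ε n = ((ε (n + 1) : ℝ) + cantorShift q ε (n + 1)) / q (n + 1) := by
  have hs := cantor_summable hq hε (n := n)
  have hq1 : (0:ℝ) < q (n + 1) := qposR hq (by omega)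
  unfold cantorShift
  rw [Summable.tsum_eq_zero_add hs]
  have htail : ∀ k : ℕ, (ε (n + (k + 1) + 1) : ℝ) / ∏ i ∈ Finset.Icc (n + 1) (n + (k + 1) + 1), (q i : ℝ)
      = (1 / (q (n + 1) : ℝ)) * ((ε ((n + 1) + k + 1) : ℝ) / ∏ i ∈ Finset.Icc ((n + 1) + 1) ((n + 1) + k + 1), (q i : ℝ)) := by
    intro k
    have hins : Finset.Icc (n + 1) (n + (k + 1) + 1) = insert (n + 1) (Finset.Icc (n + 2) (n + k + 2)) := by
      ext x; simp [Finset.mem_Icc]; omega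
    have hnot : (n + 1) ∉ Finset.Icc (n + 2) (n + k + 2) := by simp
    rw [hins, Finset.prod_insert hnot,
        show (n + 1) + k + 1 = n + k + 2 by ring, show (n + 1) + 1 = n + 2 by ring,
        show n + (k + 1) + 1 = n + k + 2 by ring]
    have hP := prodQ_pos hq (n + 1) (n + k + 2)
    field_simp
  rw [tsum_congr htail, tsum_mul_left]
  have h0 : n + 0 + 1 = n + 1 := by ring
  rw [h0]
  have hsing : Finset.Icc (n + 1) (n + 1) = {n + 1} := Finset.Icc_self _
  rw [hsing, Finset.prod_singleton]
  field_simp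

end aux

/-- with `Q = min {q_n : n ≥ 1}` and a fixed `e ∈ {0, …, Q−1}`, the digit
sequence `(ε_k)` satisfies `σ^n(x) = x = e/(Q−1)` for all `n ≥ 0` iff
`ε_n·(Q−1) = (q_n−1)·e` for every `n ≥ 1`. -/
theorem cantor_shift_fixed_iff_digits
    (q : ℕ → ℕ) (hq : ∀ k, 1 ≤ k → 2 ≤ q k)
    (ε : ℕ → ℕ) (hε : ∀ k, 1 ≤ k → ε k ≤ q k - 1)
    (Q : ℕ) (hQ : IsLeast {m : ℕ | ∃ n : ℕ, 1 ≤ n ∧ q n = m} Q)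
    (e : ℕ) (he : e ≤ Q - 1) :
    (∀ n : ℕ, cantorShift q ε n = (e : ℝ) / ((Q : ℝ) - 1)) ↔
    (∀ n : ℕ, 1 ≤ n → ε n * (Q - 1) = (q n - 1) * e) := by
  have hQ2 : 2 ≤ Q := by
    obtain ⟨n0, hn0, hq0⟩ := hQ.1
    have := hq n0 hn0; omega
  have hQ1R : (1:ℝ) < Q := by exact_mod_cast hQ2
  have hQne : ((Q:ℝ) - 1) ≠ 0 := by linarith
  constructor
  · intro h n hn
    obtain ⟨m, rfl⟩ : ∃ m, n = m + 1 := ⟨n - 1, by omega⟩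
    have hrec := cantor_rec hq hε m
    rw [h m, h (m + 1)] at hrec
    have hq1 : (0:ℝ) < q (m + 1) := qposR hq (by omega)
    have hreal : (ε (m + 1) : ℝ) * ((Q:ℝ) - 1) = ((q (m + 1) : ℝ) - 1) * e := by
      field_simp at hrec
      nlinarith [hrec]
    have h1 : (1:ℕ) ≤ Q := by omega
    have h2 : (1:ℕ) ≤ q (m + 1) := by have := hq (m + 1) (by omega); omega
    have : ((ε (m + 1) * (Q - 1) : ℕ) : ℝ) = (((q (m + 1) - 1) * e : ℕ) : ℝ) := by
      push_cast [h1, h2]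
      linarith [hreal]
    exact_mod_cast this
  · intro h n
    set c : ℝ := (e : ℝ) / ((Q:ℝ) - 1) with hc
    set g : ℕ → ℝ := fun k => 1 / ∏ i ∈ Finset.Icc (n + 1) (n + k), (q i : ℝ) with hg
    have hPpos : ∀ k, 0 < ∏ i ∈ Finset.Icc (n + 1) (n + k), (q i : ℝ) :=
      fun k => prodQ_pos hq n (n + k)
    have hsplit : ∀ k : ℕ, ∏ i ∈ Finset.Icc (n + 1) (n + k + 1), (q i : ℝ)
        = (∏ i ∈ Finset.Icc (n + 1) (n + k), (q i : ℝ)) * q (n + k + 1) :=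
      fun k => Finset.prod_Icc_succ_top (by omega) _
    have hterm : ∀ k : ℕ, (ε (n + k + 1) : ℝ) / ∏ i ∈ Finset.Icc (n + 1) (n + k + 1), (q i : ℝ)
        = c * (g k - g (k + 1)) := by
      intro k
      have hreal : (ε (n + k + 1) : ℝ) * ((Q:ℝ) - 1) = ((q (n + k + 1) : ℝ) - 1) * e := by
        have hnat := h (n + k + 1) (by omega)
        have h1 : (1:ℕ) ≤ Q := by omega
        have h2 : (1:ℕ) ≤ q (n + k + 1) := by have := hq (n + k + 1) (by omega); omega
        have : ((ε (n + k + 1) * (Q - 1) : ℕ) : ℝ) = (((q (n + k + 1) - 1) * e : ℕ) : ℝ) := by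
          exact_mod_cast congrArg (Nat.cast : ℕ → ℝ) hnat
        push_cast [h1, h2] at this
        linarith [this]
      have hq1 : (0:ℝ) < q (n + k + 1) := qposR hq (by omega)
      have hPk := hPpos k
      simp only [hg, hc]
      rw [show n + (k + 1) = n + k + 1 by ring, hsplit k]
      field_simp
      linear_combination hreal
    have hgsum : HasSum (fun k : ℕ => g k - g (k + 1)) 1 := by
      rw [hasSum_iff_tendsto_nat_of_nonneg]
      · have hps : ∀ m : ℕ, ∑ i ∈ Finset.range m, (g i - g (i + 1)) = g 0 - g m :=
          fun m => Finset.sum_range_sub' g m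
        simp only [hps]
        have hg0 : g 0 = 1 := by
          simp [hg, show Finset.Icc (n + 1) (n + 0) = ∅ by
            rw [Finset.Icc_eq_empty_iff]; omega]
        rw [hg0]
        have hgto : Tendsto g atTop (𝓝 0) := by
          apply squeeze_zero (fun m => by positivity)
            (fun m => ?_) (tendsto_pow_atTop_nhds_zero_of_lt_one (by norm_num) (by norm_num : (1/2:ℝ) < 1))
          have := two_pow_le_prod hq n m
          simp only [hg]
          calc 1 / ∏ i ∈ Finset.Icc (n + 1) (n + m), (q i : ℝ)
              ≤ 1 / (2:ℝ) ^ m := one_div_le_one_div_of_le (by positivity) this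
            _ = (1/2:ℝ) ^ m := by rw [one_div_pow]
        have := hgto.const_sub 1
        simpa using this
      · intro k
        have hle : (∏ i ∈ Finset.Icc (n + 1) (n + k), (q i : ℝ))
            ≤ ∏ i ∈ Finset.Icc (n + 1) (n + k + 1), (q i : ℝ) := by
          rw [hsplit k]
          have h2R : (1:ℝ) ≤ q (n + k + 1) := by
            have : (2:ℝ) ≤ q (n + k + 1) := by exact_mod_cast hq (n + k + 1) (by omega)
            linarith
          nlinarith [mul_le_mul_of_nonneg_left h2R (le_of_lt (hPpos k))]
        simp only [hg, show n + (k + 1) = n + k + 1 by ring]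
        have := one_div_le_one_div_of_le (hPpos k) hle
        linarith
    have : HasSum (fun k : ℕ => c * (g k - g (k + 1))) (c * 1) := hgsum.mul_left c
    unfold cantorShift
    rw [tsum_congr hterm, this.tsum_eq, mul_one]
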